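/- arXiv:1209.1242 — 2 statements merged into one kernel-verified Lean document; each statement's English description precedes it below -/
import Mathlib

section
/- Let G be a group, n ≥ 3, and let e, f, g, h ∈ End F_n(G) be rank-1 idempotents with e R f, f L g, g R h, h L e (Green's relations in End F_n(G)). Then the square (e, f, g, h) is singular — i.e., there exists an idempotent k ∈ End F_n(G) such that either (ek = e, fk = f, ke = h, kf = g) or (ke = e, kh = h, ek = f, hk = g) — if and only if {e, f, g, h} is a rectangular band, equivalently eg = f. -/
/-- An endomorphism of the rank-`n` free left `G`-act `F_n(G) = G × Fin n`
(the formal symbols `g x_i` are the pairs `(g, i)`), where the action is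
`h • (g, i) = (h * g, i)` and equivariance says `(h • x) a = h • (x a)`. -/
structure ActEnd (G : Type*) [Group G] (n : ℕ) : Type _ where
  toFun : G × Fin n → G × Fin n
  equivariant : ∀ (h : G) (x : G × Fin n),
    toFun (h * x.1, x.2) = (h * (toFun x).1, (toFun x).2)

namespace ActEnd

variable {G : Type*} [Group G] {n : ℕ}

/-- Composition is written left-to-right: `x (a * b) = (x a) b`. -/
instance : Monoid (ActEnd G n) where
  mul a b := ⟨fun x => b.toFun (a.toFun x), by
    intro h x
    try dsimp only
    rw [a.equivariant h x, b.equivariant]⟩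
  one := ⟨id, fun _ _ => rfl⟩
  mul_assoc _ _ _ := rfl
  one_mul _ := rfl
  mul_one _ := rfl

@[simp] theorem mul_toFun (a b : ActEnd G n) (x : G × Fin n) :
    (a * b).toFun x = b.toFun (a.toFun x) := rfl

theorem ext' {a b : ActEnd G n} (h : a.toFun = b.toFun) : a = b := by
  cases a; cases b; cases h; rfl

/-- The rank of an endomorphism of `F_n(G)`: the number of indices `j` such
that `G x_j` meets the image. -/
noncomputable def rank (a : ActEnd G n) : ℕ :=
  Nat.card {j : Fin n // ∃ x, (a.toFun x).2 = j}

end ActEnd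

/-- The principal left ideal `M a` of `a`. -/
def lIdeal {M : Type*} [Monoid M] (a : M) : Set M := Set.range fun m => m * a

/-- The principal right ideal `a M` of `a`. -/
def rIdeal {M : Type*} [Monoid M] (a : M) : Set M := Set.range fun m => a * m

/-- The `H`-class of `e`: all elements that are both `L`- and `R`-related to `e`. -/
def hClass {M : Type*} [Monoid M] (e : M) : Set M :=
  {a | lIdeal a = lIdeal e ∧ rIdeal a = rIdeal e}

namespace ActEnd

variable {G : Type*} [Group G] {n : ℕ}

/-- The vector part of an endomorphism. -/
def vec (a : ActEnd G n) (i : Fin n) : G := (a.toFun (1, i)).1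

/-- The index part of an endomorphism. -/
def idx (a : ActEnd G n) (i : Fin n) : Fin n := (a.toFun (1, i)).2

theorem toFun_eq (a : ActEnd G n) (x : G × Fin n) :
    a.toFun x = (x.1 * a.vec x.2, a.idx x.2) := by
  obtain ⟨c, i⟩ := x
  have := a.equivariant c (1, i)
  simp only [mul_one] at this
  exact this

theorem idx_const {a : ActEnd G n} (ha : a.rank = 1) (i i' : Fin n) :
    a.idx i = a.idx i' := by
  rw [rank, Nat.card_eq_one_iff_exists] at ha
  obtain ⟨⟨j, hj⟩, hall⟩ := ha
  have h1 := hall ⟨a.idx i, (1, i), rfl⟩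
  have h2 := hall ⟨a.idx i', (1, i'), rfl⟩
  rw [Subtype.mk.injEq] at h1 h2
  rw [h1, h2]

theorem vec_idx {a : ActEnd G n} (ha : a * a = a) (i : Fin n) :
    a.vec (a.idx i) = 1 := by
  have h1 : (a.toFun (a.toFun (1, i))).1 = (a.toFun (1, i)).1 := by
    rw [← mul_toFun, ha]
  rw [toFun_eq a (1, i), toFun_eq a (_, _)] at h1
  simp only [one_mul] at h1
  exact mul_left_cancel (h1.trans (mul_one _).symm)

/-- Auxiliary idempotent used for singularisation. -/
def K (h : ActEnd G n) (j j' : Fin n) : ActEnd G n :=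
  ⟨fun x => (x.1 * (if x.2 = j' then 1 else h.vec x.2), if x.2 = j' then j' else j),
   fun c x => by dsimp only; rw [mul_assoc]⟩

@[simp] theorem K_toFun (h : ActEnd G n) (j j' : Fin n) (x : G × Fin n) :
    (K h j j').toFun x
      = (x.1 * (if x.2 = j' then 1 else h.vec x.2), if x.2 = j' then j' else j) := rfl

end ActEnd

/-- An `E`-square `(e, f, g, h)` of rank-1 idempotents of `End F_n(G)`
(`n ≥ 3`) is singular (there is an idempotent `k` witnessing an up-down or a
left-right singularisation) if and only if `{e, f, g, h}` is a rectangular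
band, equivalently `e g = f`. -/
theorem stmt8 {G : Type*} [Group G] {n : ℕ} (hn : 3 ≤ n) (e f g h : ActEnd G n)
    (he : e * e = e) (hf : f * f = f) (hg : g * g = g) (hh : h * h = h)
    (hre : ActEnd.rank e = 1) (hrf : ActEnd.rank f = 1)
    (hrg : ActEnd.rank g = 1) (hrh : ActEnd.rank h = 1)
    (hef : rIdeal e = rIdeal f) (hfg : lIdeal f = lIdeal g)
    (hgh : rIdeal g = rIdeal h) (hhe : lIdeal h = lIdeal e) :
    (∃ k : ActEnd G n, k * k = k ∧
        ((e * k = e ∧ f * k = f ∧ k * e = h ∧ k * f = g) ∨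
         (k * e = e ∧ k * h = h ∧ e * k = f ∧ h * k = g))) ↔ e * g = f := by
  classical
  have hR : ∀ a b : ActEnd G n, rIdeal a = rIdeal b → ∃ u, a * u = b := by
    intro a b hab
    have hb : b ∈ rIdeal b := ⟨1, mul_one b⟩
    rw [← hab] at hb
    exact hb
  have hL : ∀ a b : ActEnd G n, lIdeal a = lIdeal b → ∃ u, u * b = a := by
    intro a b hab
    have ha : a ∈ lIdeal a := ⟨1, one_mul a⟩
    rw [hab] at ha
    exact ha
  have i0 : Fin n := ⟨0, by omega⟩
  set j : Fin n := e.idx i0 with hjd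
  set j' : Fin n := f.idx i0 with hjd'
  have hje : ∀ i, e.idx i = j := fun i => ActEnd.idx_const hre i i0
  have hjf : ∀ i, f.idx i = j' := fun i => ActEnd.idx_const hrf i i0
  -- g has index j'
  have hjg : ∀ i, g.idx i = j' := by
    obtain ⟨u, hu⟩ := hL g f hfg.symm
    intro i
    have h1 : g.idx i = (f.toFun (u.toFun (1, i))).2 := by
      rw [← ActEnd.mul_toFun, hu]; rfl
    rw [ActEnd.toFun_eq u, ActEnd.toFun_eq f] at h1
    rw [h1]; exact hjf _
  -- h has index j
  have hjh : ∀ i, h.idx i = j := by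
    obtain ⟨u, hu⟩ := hL h e hhe
    intro i
    have h1 : h.idx i = (e.toFun (u.toFun (1, i))).2 := by
      rw [← ActEnd.mul_toFun, hu]; rfl
    rw [ActEnd.toFun_eq u, ActEnd.toFun_eq e] at h1
    rw [h1]; exact hje _
  have ve : e.vec j = 1 := by have := ActEnd.vec_idx he i0; rwa [hje i0] at this
  have vf : f.vec j' = 1 := by have := ActEnd.vec_idx hf i0; rwa [hjf i0] at this
  have vg : g.vec j' = 1 := by have := ActEnd.vec_idx hg i0; rwa [hjg i0] at this
  have vh : h.vec j = 1 := by have := ActEnd.vec_idx hh i0; rwa [hjh i0] at this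
  -- R-relations: vectors differ by a right constant
  have hFe : ∀ i, f.vec i = e.vec i * (e.vec j')⁻¹ := by
    obtain ⟨u, hu⟩ := hR e f hef
    have key : ∀ i, f.vec i = e.vec i * u.vec j := by
      intro i
      have h1 : f.vec i = (u.toFun (e.toFun (1, i))).1 := by
        rw [← ActEnd.mul_toFun, hu]; rfl
      rw [ActEnd.toFun_eq e, ActEnd.toFun_eq u] at h1
      simpa [hje i] using h1
    have h2 := key j'
    rw [vf] at h2
    have h3 : u.vec j = (e.vec j')⁻¹ := eq_inv_of_mul_eq_one_right h2.symm
    intro i; rw [key i, h3]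
  have hHg : ∀ i, h.vec i = g.vec i * (g.vec j)⁻¹ := by
    obtain ⟨u, hu⟩ := hR g h hgh
    have key : ∀ i, h.vec i = g.vec i * u.vec j' := by
      intro i
      have h1 : h.vec i = (u.toFun (g.toFun (1, i))).1 := by
        rw [← ActEnd.mul_toFun, hu]; rfl
      rw [ActEnd.toFun_eq g, ActEnd.toFun_eq u] at h1
      simpa [hjg i] using h1
    have h2 := key j
    rw [vh] at h2
    have h3 : u.vec j' = (g.vec j)⁻¹ := eq_inv_of_mul_eq_one_right h2.symm
    intro i; rw [key i, h3]
  -- The bridge: e * g = f ↔ e.vec j' * g.vec j = 1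
  have bridge : e * g = f ↔ e.vec j' * g.vec j = 1 := by
    constructor
    · intro heg
      have h1 : (g.toFun (e.toFun (1, j'))).1 = (f.toFun (1, j')).1 := by
        rw [← ActEnd.mul_toFun, heg]
      rw [ActEnd.toFun_eq e, ActEnd.toFun_eq g, ActEnd.toFun_eq f] at h1
      simpa [hje j', vf] using h1
    · intro hc
      have hgj : g.vec j = (e.vec j')⁻¹ := eq_inv_of_mul_eq_one_right hc
      apply ActEnd.ext'
      funext x
      obtain ⟨c, i⟩ := x
      rw [ActEnd.mul_toFun, ActEnd.toFun_eq e, ActEnd.toFun_eq g, ActEnd.toFun_eq f]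
      simp [hje, hjg, hjf, hFe i, hgj, mul_assoc]
  rw [bridge]
  constructor
  · -- singular → rectangular band
    rintro ⟨k, hkk, ⟨hek, hfk, hke, hkf⟩ | ⟨hke, hkh, hek, hhk⟩⟩
    · -- up-down
      have h1 : k.toFun (f.toFun (1, j')) = f.toFun (1, j') := by
        rw [← ActEnd.mul_toFun, hfk]
      rw [ActEnd.toFun_eq f, ActEnd.toFun_eq k] at h1
      simp only [hjf j', vf, mul_one, one_mul, Prod.mk.injEq] at h1
      obtain ⟨hkv, hki⟩ := h1
      have h2 : (e.toFun (k.toFun (1, j'))).1 = (h.toFun (1, j')).1 := by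
        rw [← ActEnd.mul_toFun, hke]
      rw [ActEnd.toFun_eq k, ActEnd.toFun_eq e, ActEnd.toFun_eq h] at h2
      simp only [one_mul, hkv, hki, one_mul] at h2
      have h3 : e.vec j' = h.vec j' := h2
      rw [h3, hHg j', vg, one_mul, inv_mul_cancel]
    · -- left-right
      have h1 : k.toFun (e.toFun (1, j)) = f.toFun (1, j) := by
        rw [← ActEnd.mul_toFun, hek]
      rw [ActEnd.toFun_eq e, ActEnd.toFun_eq k, ActEnd.toFun_eq f] at h1
      simp only [hje j, ve, mul_one, one_mul, Prod.mk.injEq] at h1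
      obtain ⟨hkv, hki⟩ := h1
      have h2 : (k.toFun (h.toFun (1, j))).1 = (g.toFun (1, j)).1 := by
        rw [← ActEnd.mul_toFun, hhk]
      rw [ActEnd.toFun_eq h, ActEnd.toFun_eq k, ActEnd.toFun_eq g] at h2
      simp only [hjh j, vh, mul_one, one_mul] at h2
      have h3 : g.vec j = f.vec j := by rw [← h2, hkv]
      rw [h3, hFe j, ve, one_mul]
      exact mul_inv_cancel (e.vec j')
  · -- rectangular band → singular
    intro hc
    have hgj : g.vec j = (e.vec j')⁻¹ := eq_inv_of_mul_eq_one_right hc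
    have hej : e.vec j' = (g.vec j)⁻¹ := by rw [hgj, inv_inv]
    have kvj : (if j = j' then (1 : G) else h.vec j) = 1 := by
      by_cases hjj : j = j' <;> simp [hjj, vh]
    have kij : (if j = j' then j' else j) = j := by
      by_cases hjj : j = j' <;> simp [hjj]
    refine ⟨ActEnd.K h j j', ?_, Or.inl ⟨?_, ?_, ?_, ?_⟩⟩
    · -- idempotent
      apply ActEnd.ext'
      funext x
      obtain ⟨c, i⟩ := x
      rw [ActEnd.mul_toFun]
      by_cases hij : i = j' <;> simp [ActEnd.K_toFun, hij, kvj, kij]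
    · -- e * k = e
      apply ActEnd.ext'
      funext x
      obtain ⟨c, i⟩ := x
      rw [ActEnd.mul_toFun, ActEnd.toFun_eq e (c, i), ActEnd.K_toFun]
      simp [hje i, kvj, kij]
    · -- f * k = f
      apply ActEnd.ext'
      funext x
      obtain ⟨c, i⟩ := x
      rw [ActEnd.mul_toFun, ActEnd.toFun_eq f (c, i), ActEnd.K_toFun]
      simp [hjf i]
    · -- k * e = h
      apply ActEnd.ext'
      funext x
      obtain ⟨c, i⟩ := x
      rw [ActEnd.mul_toFun, ActEnd.K_toFun, ActEnd.toFun_eq e, ActEnd.toFun_eq h]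
      by_cases hij : i = j'
      · have hmm : e.vec j' = h.vec j' := by
          rw [hHg j', vg, one_mul, hej]
        simp [hij, hje, hjh, hmm, Prod.mk.injEq, mul_assoc]
      · simp [hij, hje, hjh, ve, Prod.mk.injEq, mul_assoc]
    · -- k * f = g
      apply ActEnd.ext'
      funext x
      obtain ⟨c, i⟩ := x
      rw [ActEnd.mul_toFun, ActEnd.K_toFun, ActEnd.toFun_eq f, ActEnd.toFun_eq g]
      by_cases hij : i = j'
      · simp [hij, hjf, hjg, vf, vg, Prod.mk.injEq]
      · have hfj : f.vec j = g.vec j := by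
          rw [hFe j, ve, one_mul, ← hgj]
        simp [hij, hjf, hjg, hfj, hHg i, Prod.mk.injEq, mul_assoc]
end

section
/- Let G be a group, n ≥ 3, E the set of idempotents of End F_n(G), and IG(E) the free idempotent generated monoid over E. If e, f, g ∈ End F_n(G) are idempotents of rank 1 with ef = g, then ē f̄ = ḡ in IG(E). -/
/-- The defining relation of the free idempotent generated monoid `IG(E)`:
`ē f̄ = (e f)‾` whenever `{e, f} ∩ {e f, f e} ≠ ∅`. -/
def igRel (M : Type*) [Monoid M] :
    FreeMonoid {e : M // e * e = e} → FreeMonoid {e : M // e * e = e} → Prop :=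
  fun x y => ∃ e f g : {e : M // e * e = e},
    (e.1 * f.1 = e.1 ∨ e.1 * f.1 = f.1 ∨ f.1 * e.1 = e.1 ∨ f.1 * e.1 = f.1) ∧
    e.1 * f.1 = g.1 ∧
    x = FreeMonoid.of e * FreeMonoid.of f ∧ y = FreeMonoid.of g

/-- The free idempotent generated monoid over the biordered set of idempotents
of `M`: the presented monoid with generators `ē` for each idempotent `e` and
relations `ē f̄ = (e f)‾` whenever `{e, f} ∩ {e f, f e} ≠ ∅`. -/
abbrev IG (M : Type*) [Monoid M] : Type _ := (conGen (igRel M)).Quotient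

/-- The generator `ē` of `IG(E)` corresponding to the idempotent `e`. -/
def ebar {M : Type*} [Monoid M] (e : {e : M // e * e = e}) : IG M :=
  (conGen (igRel M)).mk' (FreeMonoid.of e)


namespace ActEnd

variable {G : Type*} [Group G] {n : ℕ}

theorem sec_const {a : ActEnd G n} (h : a.rank = 1) (x y : G × Fin n) :
    (a.toFun x).2 = (a.toFun y).2 := by
  have hs := (Nat.card_eq_one_iff_unique.mp h).1
  have : (⟨(a.toFun x).2, ⟨x, rfl⟩⟩ : {j : Fin n // ∃ z, (a.toFun z).2 = j}) =
      ⟨(a.toFun y).2, ⟨y, rfl⟩⟩ := Subsingleton.elim _ _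
  exact congrArg Subtype.val this

theorem apply_eq (a : ActEnd G n) (h : G) (i : Fin n) :
    a.toFun (h, i) = (h * (a.toFun (1, i)).1, (a.toFun (1, i)).2) := by
  have := a.equivariant h (1, i)
  simpa using this

/-- The singularizing idempotent: fixes `G x_je` and `G x_jf`, acts like `e` elsewhere. -/
def sing (je jf : Fin n) (c : Fin n → G) : ActEnd G n where
  toFun x := if x.2 = je ∨ x.2 = jf then x else (x.1 * c x.2, je)
  equivariant h x := by
    dsimp only
    by_cases hx : x.2 = je ∨ x.2 = jf
    · simp [hx]
    · simp [hx, mul_assoc]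

theorem sing_apply_mem {je jf : Fin n} {c : Fin n → G} {x : G × Fin n}
    (hx : x.2 = je ∨ x.2 = jf) : (sing je jf c).toFun x = x := by
  simp [sing, hx]

theorem sing_apply_not {je jf : Fin n} {c : Fin n → G} {x : G × Fin n}
    (hx : ¬(x.2 = je ∨ x.2 = jf)) : (sing je jf c).toFun x = (x.1 * c x.2, je) := by
  simp only [sing, if_neg hx]

end ActEnd

/-- Key `IG(E)` computation from the four multiplicative identities. -/
theorem ig_key {M : Type*} [Monoid M] (e s f g : M)
    (he : e * e = e) (hs : s * s = s) (hf : f * f = f) (hg : g * g = g)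
    (hes : e * s = e) (hfs : f * s = f) (hsf : s * f = g) (heg : e * g = g) :
    ebar ⟨e, he⟩ * ebar ⟨f, hf⟩ = ebar ⟨g, hg⟩ := by
  set e' : {a : M // a * a = a} := ⟨e, he⟩ with he'
  set f' : {a : M // a * a = a} := ⟨f, hf⟩ with hf'
  set g' : {a : M // a * a = a} := ⟨g, hg⟩ with hg'
  set s' : {a : M // a * a = a} := ⟨s, hs⟩ with hs'
  set cg := conGen (igRel M) with hcg
  have r1 : cg (FreeMonoid.of e' * FreeMonoid.of s') (FreeMonoid.of e') :=
    ConGen.Rel.of _ _ ⟨e', s', e', Or.inl hes, hes, rfl, rfl⟩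
  have r2 : cg (FreeMonoid.of s' * FreeMonoid.of f') (FreeMonoid.of g') :=
    ConGen.Rel.of _ _ ⟨s', f', g', Or.inr (Or.inr (Or.inr hfs)), hsf, rfl, rfl⟩
  have r3 : cg (FreeMonoid.of e' * FreeMonoid.of g') (FreeMonoid.of g') :=
    ConGen.Rel.of _ _ ⟨e', g', g', Or.inr (Or.inl heg), heg, rfl, rfl⟩
  have main : cg (FreeMonoid.of e' * FreeMonoid.of f') (FreeMonoid.of g') := by
    have step1 : cg (FreeMonoid.of e' * FreeMonoid.of f')
        (FreeMonoid.of e' * (FreeMonoid.of s' * FreeMonoid.of f')) := by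
      have := cg.mul (cg.symm r1) (cg.refl (FreeMonoid.of f'))
      rwa [mul_assoc] at this
    have step2 : cg (FreeMonoid.of e' * (FreeMonoid.of s' * FreeMonoid.of f'))
        (FreeMonoid.of e' * FreeMonoid.of g') :=
      cg.mul (cg.refl (FreeMonoid.of e')) r2
    exact cg.trans (cg.trans step1 step2) r3
  show cg.mk' (FreeMonoid.of e') * cg.mk' (FreeMonoid.of f') = cg.mk' (FreeMonoid.of g')
  rw [← map_mul]
  exact (Con.eq cg).mpr main

/-- If `e, f, g` are rank-1 idempotents of `End F_n(G)` (`n ≥ 3`) with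
`e f = g`, then `ē f̄ = ḡ` holds in `IG(E)`. -/
theorem stmt10 {G : Type*} [Group G] {n : ℕ} (hn : 3 ≤ n)
    (e f g : ActEnd G n) (he : e * e = e) (hf : f * f = f) (hg : g * g = g)
    (hre : ActEnd.rank e = 1) (hrf : ActEnd.rank f = 1) (hrg : ActEnd.rank g = 1)
    (hefg : e * f = g) :
    ebar ⟨e, he⟩ * ebar ⟨f, hf⟩ = ebar ⟨g, hg⟩ := by
  classical
  have hn0 : 0 < n := by omega
  set i0 : Fin n := ⟨0, hn0⟩ with hi0
  set je : Fin n := (e.toFun (1, i0)).2 with hje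
  set jf : Fin n := (f.toFun (1, i0)).2 with hjf
  set c : Fin n → G := fun i => (e.toFun (1, i)).1 with hc
  set d : Fin n → G := fun i => (f.toFun (1, i)).1 with hd
  have heF : ∀ (h : G) (i : Fin n), e.toFun (h, i) = (h * c i, je) := by
    intro h i
    rw [ActEnd.apply_eq]
    exact Prod.ext rfl (ActEnd.sec_const hre (1, i) (1, i0))
  have hfF : ∀ (h : G) (i : Fin n), f.toFun (h, i) = (h * d i, jf) := by
    intro h i
    rw [ActEnd.apply_eq]
    exact Prod.ext rfl (ActEnd.sec_const hrf (1, i) (1, i0))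
  have hcje : c je = 1 := by
    have h1 : e.toFun (e.toFun (1, i0)) = e.toFun (1, i0) :=
      congrFun (congrArg ActEnd.toFun he) (1, i0)
    rw [heF 1 i0, heF] at h1
    have h2 : (1 * c i0) * c je = (1 * c i0) * 1 := by
      simpa using congrArg Prod.fst h1
    exact mul_left_cancel h2
  have hdjf : d jf = 1 := by
    have h1 : f.toFun (f.toFun (1, i0)) = f.toFun (1, i0) :=
      congrFun (congrArg ActEnd.toFun hf) (1, i0)
    rw [hfF 1 i0, hfF] at h1
    have h2 : (1 * d i0) * d jf = (1 * d i0) * 1 := by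
      simpa using congrArg Prod.fst h1
    exact mul_left_cancel h2
  have hgF : ∀ (h : G) (i : Fin n), g.toFun (h, i) = ((h * c i) * d je, jf) := by
    intro h i
    rw [← hefg, ActEnd.mul_toFun, heF, hfF]
  have key : c jf * d je = 1 := by
    have h1 : g.toFun (g.toFun (1, i0)) = g.toFun (1, i0) :=
      congrFun (congrArg ActEnd.toFun hg) (1, i0)
    rw [hgF 1 i0, hgF] at h1
    have h3 : 1 * c i0 * d je * c jf * d je = 1 * c i0 * d je :=
      congrArg Prod.fst h1
    have h4 : (1 * c i0 * d je) * (c jf * d je) = (1 * c i0 * d je) * 1 := by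
      rw [← mul_assoc, mul_one]; exact h3
    exact mul_left_cancel h4
  set s : ActEnd G n := ActEnd.sing je jf c with hsdef
  have hss : s * s = s := by
    apply ActEnd.ext'
    funext x
    obtain ⟨h, i⟩ := x
    show s.toFun (s.toFun (h, i)) = s.toFun (h, i)
    by_cases hi : i = je ∨ i = jf
    · rw [ActEnd.sing_apply_mem (x := (h, i)) hi, ActEnd.sing_apply_mem (x := (h, i)) hi]
    · rw [ActEnd.sing_apply_not (x := (h, i)) hi]
      exact ActEnd.sing_apply_mem (Or.inl rfl)
  have hes : e * s = e := by
    apply ActEnd.ext'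
    funext x
    obtain ⟨h, i⟩ := x
    show s.toFun (e.toFun (h, i)) = e.toFun (h, i)
    rw [heF]
    exact ActEnd.sing_apply_mem (Or.inl rfl)
  have hfs : f * s = f := by
    apply ActEnd.ext'
    funext x
    obtain ⟨h, i⟩ := x
    show s.toFun (f.toFun (h, i)) = f.toFun (h, i)
    rw [hfF]
    exact ActEnd.sing_apply_mem (Or.inr rfl)
  have hsf : s * f = g := by
    apply ActEnd.ext'
    funext x
    obtain ⟨h, i⟩ := x
    show f.toFun (s.toFun (h, i)) = g.toFun (h, i)
    rw [hgF]
    by_cases h1 : i = je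
    · subst h1
      rw [show s.toFun (h, je) = (h, je) from ActEnd.sing_apply_mem (Or.inl rfl), hfF,
        hcje, mul_one]
    · by_cases h2 : i = jf
      · subst h2
        rw [show s.toFun (h, jf) = (h, jf) from ActEnd.sing_apply_mem (Or.inr rfl), hfF,
          hdjf, mul_one, mul_assoc, key, mul_one]
      · rw [show s.toFun (h, i) = (h * c i, je) from ActEnd.sing_apply_not (by tauto), hfF]
  have heg : e * g = g := by rw [← hefg, ← mul_assoc, he]
  exact ig_key e s f g he hss hf hg hes hfs hsf heg
end
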